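/- Let m = 2, suppose the simplex (x = 0, z_1, z_2) is monotone causal for the speed profile V (i.e., C(ξ) ≥ max(ξ_1 C_1, ξ_2 C_2) on Ξ_2), and let 0 < δ ≤ min(C_1, C_2). If every point of V_s, when written as θ_1 v_1 + θ_2 v_2 with θ_1, θ_2 ≥ 0, satisfies θ_1 + θ_2·δ/C_2 ≤ 1 and θ_2 + θ_1·δ/C_1 ≤ 1 (equivalently, V_s is contained in the quadrilateral with vertices 0, v_1, v_2 and w(δ) = θ_1^#(δ)v_1 + θ_2^#(δ)v_2, where θ_1^#(δ) = C_1(C_2−δ)/(C_1C_2−δ²) and θ_2^#(δ) = C_2(C_1−δ)/(C_1C_2−δ²)), then for every ξ ∈ Ξ_2: C(ξ) ≥ ξ_1 C_1 + ξ_2 δ and C(ξ) ≥ ξ_1 δ + ξ_2 C_2; that is, the simplex is monotone δ-causal. -/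

import Mathlib

/-- The semi-Lagrangian transition cost `C(ξ) = |x̃_ξ| / f(a_ξ)`, written as a
function of the waypoint `w = x̃_ξ`.  In particular `slCost f (z j) = C_j`. -/
noncomputable def slCost {E : Type*} [NormedAddCommGroup E] [InnerProductSpace ℝ E]
    (f : E → ℝ) (w : E) : ℝ := ‖w‖ / f (‖w‖⁻¹ • w)

/-- The velocity in the direction of `w`:  `slVel f (z j) = v_j`. -/
noncomputable def slVel {E : Type*} [NormedAddCommGroup E] [InnerProductSpace ℝ E]
    (f : E → ℝ) (w : E) : E := f (‖w‖⁻¹ • w) • (‖w‖⁻¹ • w)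

/-- The speed profile `V = {f(a)·a : |a| = 1}`. -/
def speedProfile {E : Type*} [NormedAddCommGroup E] [InnerProductSpace ℝ E]
    (f : E → ℝ) : Set E :=
  {v | ∃ a : E, ‖a‖ = 1 ∧ v = f a • a}

lemma norm_inv_smul {E : Type*} [NormedAddCommGroup E] [InnerProductSpace ℝ E]
    {w : E} (hw : w ≠ 0) : ‖(‖w‖⁻¹ • w)‖ = 1 := by
  rw [norm_smul, norm_inv, norm_norm, inv_mul_cancel₀ (norm_ne_zero_iff.2 hw)]

lemma slCost_smul_slVel {E : Type*} [NormedAddCommGroup E] [InnerProductSpace ℝ E]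
    (f : E → ℝ) {w : E} (hw : w ≠ 0) (hf : f (‖w‖⁻¹ • w) ≠ 0) :
    slCost f w • slVel f w = w := by
  unfold slCost slVel
  rw [smul_smul, smul_smul]
  have hn : ‖w‖ ≠ 0 := norm_ne_zero_iff.2 hw
  have : ‖w‖ / f (‖w‖⁻¹ • w) * f (‖w‖⁻¹ • w) * ‖w‖⁻¹ = 1 := by
    rw [div_mul_cancel₀ _ hf, mul_inv_cancel₀ hn]
  rw [this, one_smul]

/-- δ-causality condition on `V` in `ℝ²`.
Suppose the simplex `(x = 0, z₁, z₂)` is monotone causal for `V`, let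
`0 < δ ≤ min(C₁, C₂)`, and suppose every point of `V_s`, written as
`θ₁v₁ + θ₂v₂` with `θ₁, θ₂ ≥ 0`, satisfies `θ₁ + θ₂δ/C₂ ≤ 1` and
`θ₂ + θ₁δ/C₁ ≤ 1` (containment in the quadrilateral with vertices
`0, v₁, v₂, w(δ)`).  Then `C(ξ) ≥ ξ₁C₁ + ξ₂δ` and `C(ξ) ≥ ξ₁δ + ξ₂C₂` on `Ξ₂`;
i.e., the simplex is monotone δ-causal. -/
theorem stmt12 (z₁ z₂ : EuclideanSpace ℝ (Fin 2))
    (hz : LinearIndependent ℝ ![z₁, z₂])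
    (f : EuclideanSpace ℝ (Fin 2) → ℝ)
    (hfc : ContinuousOn f (Metric.sphere (0 : EuclideanSpace ℝ (Fin 2)) 1))
    (hfpos : ∀ a : EuclideanSpace ℝ (Fin 2), ‖a‖ = 1 → 0 < f a)
    -- the simplex is monotone causal
    (hMC : ∀ ξ₁ ξ₂ : ℝ, 0 ≤ ξ₁ → 0 ≤ ξ₂ → ξ₁ + ξ₂ = 1 →
      max (ξ₁ * slCost f z₁) (ξ₂ * slCost f z₂) ≤ slCost f (ξ₁ • z₁ + ξ₂ • z₂))
    (δ : ℝ) (hδ0 : 0 < δ) (hδ : δ ≤ min (slCost f z₁) (slCost f z₂))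
    -- V_s is contained in the δ-quadrilateral
    (hcontain : ∀ θ₁ θ₂ : ℝ, 0 ≤ θ₁ → 0 ≤ θ₂ →
      θ₁ • slVel f z₁ + θ₂ • slVel f z₂ ∈ speedProfile f →
      θ₁ + θ₂ * δ / slCost f z₂ ≤ 1 ∧ θ₂ + θ₁ * δ / slCost f z₁ ≤ 1) :
    ∀ ξ₁ ξ₂ : ℝ, 0 ≤ ξ₁ → 0 ≤ ξ₂ → ξ₁ + ξ₂ = 1 →
      ξ₁ * slCost f z₁ + ξ₂ * δ ≤ slCost f (ξ₁ • z₁ + ξ₂ • z₂) ∧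
      ξ₁ * δ + ξ₂ * slCost f z₂ ≤ slCost f (ξ₁ • z₁ + ξ₂ • z₂) := by
  intro ξ₁ ξ₂ h1 h2 h12
  have hz1 : z₁ ≠ 0 := by have := hz.ne_zero 0; simpa using this
  have hz2 : z₂ ≠ 0 := by have := hz.ne_zero 1; simpa using this
  set C₁ := slCost f z₁ with hC₁def
  set C₂ := slCost f z₂ with hC₂def
  have hf1 : 0 < f (‖z₁‖⁻¹ • z₁) := hfpos _ (norm_inv_smul hz1)
  have hf2 : 0 < f (‖z₂‖⁻¹ • z₂) := hfpos _ (norm_inv_smul hz2)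
  have hC1 : 0 < C₁ := div_pos (norm_pos_iff.2 hz1) hf1
  have hC2 : 0 < C₂ := div_pos (norm_pos_iff.2 hz2) hf2
  rcases eq_or_lt_of_le h1 with h1' | h1'
  · have hξ2 : ξ₂ = 1 := by linarith
    subst hξ2
    simp only [← h1', zero_smul, one_smul, zero_add, zero_mul, one_mul]
    exact ⟨hδ.trans (min_le_right _ _), le_rfl⟩
  rcases eq_or_lt_of_le h2 with h2' | h2'
  · have hξ1 : ξ₁ = 1 := by linarith
    subst hξ1
    simp only [← h2', zero_smul, one_smul, add_zero, zero_mul, one_mul]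
    exact ⟨le_rfl, hδ.trans (min_le_left _ _)⟩
  -- main case: 0 < ξ₁, 0 < ξ₂
  set w := ξ₁ • z₁ + ξ₂ • z₂ with hwdef
  have hw : w ≠ 0 := by
    intro h
    rcases (LinearIndependent.pair_iff.1 hz) ξ₁ ξ₂ h with ⟨e1, e2⟩
    linarith
  have hfw : 0 < f (‖w‖⁻¹ • w) := hfpos _ (norm_inv_smul hw)
  set C := slCost f w with hCdef
  have hC : 0 < C := div_pos (norm_pos_iff.2 hw) hfw
  have hvw : slVel f w ∈ speedProfile f := ⟨‖w‖⁻¹ • w, norm_inv_smul hw, rfl⟩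
  have key : (ξ₁ * C₁ / C) • slVel f z₁ + (ξ₂ * C₂ / C) • slVel f z₂ = slVel f w := by
    have e1 : C₁ • slVel f z₁ = z₁ := slCost_smul_slVel f hz1 hf1.ne'
    have e2 : C₂ • slVel f z₂ = z₂ := slCost_smul_slVel f hz2 hf2.ne'
    have ew : C • slVel f w = w := slCost_smul_slVel f hw hfw.ne'
    have hmain : C • ((ξ₁ * C₁ / C) • slVel f z₁ + (ξ₂ * C₂ / C) • slVel f z₂)
        = C • slVel f w := by
      rw [ew, smul_add, smul_smul, smul_smul]
      rw [show C * (ξ₁ * C₁ / C) = ξ₁ * C₁ by field_simp,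
          show C * (ξ₂ * C₂ / C) = ξ₂ * C₂ by field_simp]
      rw [hwdef, mul_smul, mul_smul, e1, e2]
    exact smul_right_injective _ hC.ne' hmain
  have hθ1 : 0 ≤ ξ₁ * C₁ / C := by positivity
  have hθ2 : 0 ≤ ξ₂ * C₂ / C := by positivity
  obtain ⟨hA, hB⟩ := hcontain _ _ hθ1 hθ2 (key ▸ hvw)
  constructor
  · have h' : ξ₁ * C₁ / C + ξ₂ * δ / C ≤ 1 := by
      have e : ξ₂ * C₂ / C * δ / C₂ = ξ₂ * δ / C := by field_simp
      linarith [e ▸ hA]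
    rw [← add_div, div_le_one hC] at h'
    linarith
  · have h' : ξ₂ * C₂ / C + ξ₁ * δ / C ≤ 1 := by
      have e : ξ₁ * C₁ / C * δ / C₁ = ξ₁ * δ / C := by field_simp
      linarith [e ▸ hB]
    rw [← add_div, div_le_one hC] at h'
    linarith
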